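/- Let p, q be positive integers and α : (ZMod p) × (ZMod q) → ℝ a probability distribution with α(0,0) = 0. Let L̃_* be the linear map on the complex matrices indexed by (ZMod p) × (ZMod q) given by L̃_*(x) = Σ_{(i,j)} α(i,j) (J_p^i ⊗ J_q^j) x (J_p^i ⊗ J_q^j)* − x (the predual of the ρ-adjoint generator), and let Q = Σ_{(i,j)} α(i,j) (J_p^i ⊗ J_q^j) − I. Then for every t ∈ ℝ and all i, i' ∈ ZMod p, j, j' ∈ ZMod q, exp(t·L̃_*)(E_{(i,j),(i',j')}) = Σ_{(m,n)} (exp(tQ))_{(0,0),(-m,-n)} E_{(m+i,n+j),(m+i',n+j')}; equivalently, the restriction of the reverse semigroup to each invariant subspace acts as exp(tQᵀ). -/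

import Mathlib

open Matrix Kronecker

noncomputable section

attribute [local instance]
  Matrix.frobeniusNormedAddCommGroup Matrix.frobeniusNormedSpace

/-- The primary permutation (left-shift) matrix `J_p`. -/
def Jmat (p : ℕ) : Matrix (ZMod p) (ZMod p) ℂ :=
  Matrix.of fun i j => if j = i + 1 then 1 else 0

/-- The Kraus operator `J_p^i ⊗ J_q^j`. -/
def Kr (p q : ℕ) [NeZero p] [NeZero q] (i : ZMod p) (j : ZMod q) :
    Matrix (ZMod p × ZMod q) (ZMod p × ZMod q) ℂ :=
  (Jmat p ^ i.val) ⊗ₖ (Jmat q ^ j.val)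

/-- The predual of the `ρ`-adjoint circulant GKSL generator, as a linear
endomorphism of the matrix space: `L̃_*(x) = Σ α(i,j) K x Kᴴ − x`. -/
def LstarTildeLin (p q : ℕ) [NeZero p] [NeZero q] (α : ZMod p × ZMod q → ℝ) :
    Matrix (ZMod p × ZMod q) (ZMod p × ZMod q) ℂ →ₗ[ℂ]
      Matrix (ZMod p × ZMod q) (ZMod p × ZMod q) ℂ :=
  (∑ ij : ZMod p × ZMod q,
    (α ij : ℂ) •
      (LinearMap.mulLeft ℂ (Kr p q ij.1 ij.2) ∘ₗ
        LinearMap.mulRight ℂ (Kr p q ij.1 ij.2)ᴴ)) - LinearMap.id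

/-! ### Auxiliary material -/

lemma Jpow (p : ℕ) [NeZero p] (m : ℕ) : ∀ a c : ZMod p,
    (Jmat p ^ m) a c = if c = a + (m : ZMod p) then 1 else 0 := by
  induction m with
  | zero => intro a c; simp [Matrix.one_apply, eq_comm]
  | succ n ih =>
    intro a c
    rw [pow_succ, Matrix.mul_apply]
    simp only [ih]
    simp only [Jmat, Matrix.of_apply, ite_mul, one_mul, zero_mul]
    rw [Finset.sum_ite_eq' Finset.univ (a + (n : ZMod p))]
    push_cast
    simp [add_assoc]

lemma mul_std_mul {n : Type*} [Fintype n] [DecidableEq n] (A B : Matrix n n ℂ) (r c x y : n) :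
    ((A * Matrix.single r c (1:ℂ) * B) : Matrix n n ℂ) x y = A x r * B c y := by
  rw [Matrix.mul_assoc, Matrix.mul_apply]
  simp [Matrix.mul_apply, Matrix.single, ite_and, Finset.sum_ite_eq]

lemma Kr_apply (p q : ℕ) [NeZero p] [NeZero q] (k : ZMod p) (l : ZMod q)
    (a : ZMod p) (b : ZMod q) (c : ZMod p) (d : ZMod q) :
    Kr p q k l (a,b) (c,d) = if c = a + k ∧ d = b + l then 1 else 0 := by
  simp only [Kr, Matrix.kroneckerMap_apply, Jpow, ZMod.natCast_val, ZMod.cast_id]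
  by_cases h1 : c = a + k <;> by_cases h2 : d = b + l <;> simp [h1, h2]

lemma KEK (p q : ℕ) [NeZero p] [NeZero q] (k : ZMod p) (l : ZMod q)
    (a : ZMod p) (b : ZMod q) (c : ZMod p) (d : ZMod q) :
    Kr p q k l * Matrix.single (a,b) (c,d) (1:ℂ) * (Kr p q k l)ᴴ
      = Matrix.single (a-k, b-l) (c-k, d-l) (1:ℂ) := by
  ext ⟨x1,x2⟩ ⟨y1,y2⟩
  rw [mul_std_mul, Matrix.conjTranspose_apply, Kr_apply, Kr_apply]
  simp only [Matrix.single, Matrix.of_apply, Prod.mk.injEq, sub_eq_iff_eq_add,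
    apply_ite (star : ℂ → ℂ), star_one, star_zero]
  split_ifs <;> simp_all

lemma mul_Kr (p q : ℕ) [NeZero p] [NeZero q] (k : ZMod p) (l : ZMod q)
    (M : Matrix (ZMod p × ZMod q) (ZMod p × ZMod q) ℂ) (x : ZMod p × ZMod q)
    (u1 : ZMod p) (u2 : ZMod q) :
    (M * Kr p q k l) x (u1, u2) = M x (u1 - k, u2 - l) := by
  rw [Matrix.mul_apply]
  rw [Finset.sum_eq_single ((u1 - k, u2 - l) : ZMod p × ZMod q)]
  · rw [Kr_apply]; simp
  · rintro ⟨v1, v2⟩ _ hv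
    rw [Kr_apply]
    have : ¬(u1 = v1 + k ∧ u2 = v2 + l) := by
      rintro ⟨h1, h2⟩
      exact hv (by simp [h1, h2])
    simp [this]
  · simp

/-- The invariant-subspace basis vectors. -/
def wB (p q : ℕ) [NeZero p] [NeZero q] (i i' : ZMod p) (j j' : ZMod q)
    (u : ZMod p × ZMod q) : Matrix (ZMod p × ZMod q) (ZMod p × ZMod q) ℂ :=
  Matrix.single (-u.1 + i, -u.2 + j) (-u.1 + i', -u.2 + j') (1:ℂ)

/-- The embedding of a matrix of coefficients into the invariant subspace. -/
def PhiL (p q : ℕ) [NeZero p] [NeZero q] (i i' : ZMod p) (j j' : ZMod q) :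
    Matrix (ZMod p × ZMod q) (ZMod p × ZMod q) ℂ →ₗ[ℂ]
      Matrix (ZMod p × ZMod q) (ZMod p × ZMod q) ℂ where
  toFun x := ∑ u : ZMod p × ZMod q, x (0,0) u • wB p q i i' j j' u
  map_add' x y := by simp [Matrix.add_apply, add_smul, Finset.sum_add_distrib]
  map_smul' c x := by simp [Matrix.smul_apply, smul_smul, Finset.smul_sum]

lemma PhiL_apply (p q : ℕ) [NeZero p] [NeZero q] (i i' : ZMod p) (j j' : ZMod q)
    (M : Matrix (ZMod p × ZMod q) (ZMod p × ZMod q) ℂ) :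
    PhiL p q i i' j j' M = ∑ u : ZMod p × ZMod q, M (0,0) u • wB p q i i' j j' u := rfl

lemma Lstar_w (p q : ℕ) [NeZero p] [NeZero q] (α : ZMod p × ZMod q → ℝ)
    (i i' : ZMod p) (j j' : ZMod q) (u : ZMod p × ZMod q) :
    LstarTildeLin p q α (wB p q i i' j j' u) =
      (∑ kl : ZMod p × ZMod q, (α kl : ℂ) • wB p q i i' j j' (u + kl))
        - wB p q i i' j j' u := by
  simp only [LstarTildeLin, LinearMap.sub_apply, LinearMap.id_apply, LinearMap.sum_apply,
    LinearMap.smul_apply, LinearMap.comp_apply, LinearMap.mulLeft_apply,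
    LinearMap.mulRight_apply]
  congr 1
  refine Finset.sum_congr rfl fun kl _ => ?_
  congr 1
  rw [show wB p q i i' j j' u = Matrix.single (-u.1 + i, -u.2 + j)
      (-u.1 + i', -u.2 + j') (1:ℂ) from rfl]
  rw [← Matrix.mul_assoc, KEK]
  have e1 : -u.1 + i - kl.1 = -(u + kl).1 + i := by simp [Prod.fst_add]; ring
  have e2 : -u.2 + j - kl.2 = -(u + kl).2 + j := by simp [Prod.snd_add]; ring
  have e3 : -u.1 + i' - kl.1 = -(u + kl).1 + i' := by simp [Prod.fst_add]; ring
  have e4 : -u.2 + j' - kl.2 = -(u + kl).2 + j' := by simp [Prod.snd_add]; ring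
  rw [e1, e2, e3, e4]
  rfl

lemma PhiL_mul_Kr (p q : ℕ) [NeZero p] [NeZero q] (i i' : ZMod p) (j j' : ZMod q)
    (k : ZMod p) (l : ZMod q) (M : Matrix (ZMod p × ZMod q) (ZMod p × ZMod q) ℂ) :
    PhiL p q i i' j j' (M * Kr p q k l)
      = ∑ u : ZMod p × ZMod q, M (0,0) u • wB p q i i' j j' (u + (k, l)) := by
  rw [PhiL_apply]
  refine (Fintype.sum_equiv (Equiv.addRight ((k, l) : ZMod p × ZMod q))
    (fun u => M (0,0) u • wB p q i i' j j' (u + (k, l)))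
    (fun v => (M * Kr p q k l) (0,0) v • wB p q i i' j j' v) fun u => ?_).symm
  obtain ⟨u1, u2⟩ := u
  simp only [Equiv.coe_addRight, Prod.mk_add_mk, mul_Kr]
  simp

/-- The intertwining relation `L̃_* ∘ Φ = Φ ∘ (· * Q)`. -/
lemma intertwine (p q : ℕ) [NeZero p] [NeZero q] (α : ZMod p × ZMod q → ℝ)
    (i i' : ZMod p) (j j' : ZMod q) (M : Matrix (ZMod p × ZMod q) (ZMod p × ZMod q) ℂ) :
    LstarTildeLin p q α (PhiL p q i i' j j' M)
      = PhiL p q i i' j j'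
          (M * ((∑ kl : ZMod p × ZMod q, (α kl : ℂ) • Kr p q kl.1 kl.2) - 1)) := by
  have hR : M * ((∑ kl : ZMod p × ZMod q, (α kl : ℂ) • Kr p q kl.1 kl.2) - 1)
      = (∑ kl : ZMod p × ZMod q, (α kl : ℂ) • (M * Kr p q kl.1 kl.2)) - M := by
    rw [Matrix.mul_sub, Matrix.mul_one, Finset.mul_sum]
    congr 1
    exact Finset.sum_congr rfl fun kl _ => (Matrix.mul_smul _ _ _)
  rw [hR, map_sub, map_sum]
  rw [PhiL_apply, map_sum]
  simp only [_root_.map_smul, Lstar_w, PhiL_mul_Kr, Prod.mk.eta]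
  simp only [smul_sub, Finset.sum_sub_distrib]
  congr 1
  simp only [Finset.smul_sum]
  rw [Finset.sum_comm]
  exact Finset.sum_congr rfl fun kl _ => Finset.sum_congr rfl fun u _ => (smul_comm _ _ _)

lemma PhiL_one (p q : ℕ) [NeZero p] [NeZero q] (i i' : ZMod p) (j j' : ZMod q) :
    PhiL p q i i' j j' (1 : Matrix (ZMod p × ZMod q) (ZMod p × ZMod q) ℂ)
      = Matrix.single (i, j) (i', j') (1 : ℂ) := by
  rw [PhiL_apply]
  have : ∀ u : ZMod p × ZMod q,
      (1 : Matrix (ZMod p × ZMod q) (ZMod p × ZMod q) ℂ) (0,0) u • wB p q i i' j j' u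
        = if ((0,0) : ZMod p × ZMod q) = u then wB p q i i' j j' u else 0 := by
    intro u; rw [Matrix.one_apply]; split_ifs <;> simp
  simp only [this]
  rw [Finset.sum_ite_eq Finset.univ ((0,0) : ZMod p × ZMod q)]
  simp [wB]

lemma exp_clm_apply {E : Type*} [NormedAddCommGroup E] [NormedSpace ℂ E]
    [FiniteDimensional ℂ E] (A : E →L[ℂ] E) (x : E) :
    @NormedSpace.exp _ _ _ (@NonUnitalSeminormedRing.toIsTopologicalRing _
        (ContinuousLinearMap.toSeminormedRing (𝕜 := ℂ) (E := E)).toNonUnitalSeminormedRing) A x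
      = ∑' n : ℕ, ((Nat.factorial n : ℂ)⁻¹ • A ^ n) x := by
  haveI : CompleteSpace E := FiniteDimensional.complete ℂ E
  rw [NormedSpace.exp_eq_tsum ℂ]
  exact ContinuousLinearMap.map_tsum (ContinuousLinearMap.apply ℂ _ x)
    (NormedSpace.expSeries_summable' (𝕂 := ℂ) A)

theorem stmt13 (p q : ℕ) [NeZero p] [NeZero q]
    (α : ZMod p × ZMod q → ℝ) (hα : ∀ ij, 0 ≤ α ij)
    (hsum : ∑ ij : ZMod p × ZMod q, α ij = 1) (h0 : α (0, 0) = 0)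
    (Q : Matrix (ZMod p × ZMod q) (ZMod p × ZMod q) ℂ)
    (hQ : Q = (∑ ij : ZMod p × ZMod q, (α ij : ℂ) • Kr p q ij.1 ij.2) - 1) :
    ∀ (t : ℝ) (i i' : ZMod p) (j j' : ZMod q),
      @NormedSpace.exp _ _ _ (@NonUnitalSeminormedRing.toIsTopologicalRing _
          (ContinuousLinearMap.toSeminormedRing (𝕜 := ℂ)
            (E := Matrix (ZMod p × ZMod q) (ZMod p × ZMod q) ℂ)).toNonUnitalSeminormedRing)
          ((t : ℂ) • (LinearMap.toContinuousLinearMap (LstarTildeLin p q α)))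
          (Matrix.single (i, j) (i', j') (1 : ℂ)) =
        ∑ mn : ZMod p × ZMod q,
          NormedSpace.exp ((t : ℂ) • Q) (0, 0) (-mn.1, -mn.2) •
            Matrix.single (mn.1 + i, mn.2 + j) (mn.1 + i', mn.2 + j') (1 : ℂ) := by
  intro t i i' j j'
  set X : Matrix (ZMod p × ZMod q) (ZMod p × ZMod q) ℂ := (t : ℂ) • Q with hX
  set A := (t : ℂ) • (LinearMap.toContinuousLinearMap (LstarTildeLin p q α)) with hA
  -- the key iterated intertwining relation
  have key : ∀ (n : ℕ) (M : Matrix (ZMod p × ZMod q) (ZMod p × ZMod q) ℂ),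
      (A ^ n) (PhiL p q i i' j j' M) = PhiL p q i i' j j' (M * X ^ n) := by
    have hAstep : ∀ M, A (PhiL p q i i' j j' M) = PhiL p q i i' j j' (M * X) := by
      intro M
      rw [hA, ContinuousLinearMap.smul_apply]
      rw [show (LinearMap.toContinuousLinearMap (LstarTildeLin p q α)) ((PhiL p q i i' j j') M)
          = LstarTildeLin p q α ((PhiL p q i i' j j') M) from rfl]
      rw [intertwine p q α i i' j j' M, ← hQ, ← (PhiL p q i i' j j').map_smul, mul_smul_comm]
    intro n
    induction n with
    | zero => intro M; simp
    | succ n ih =>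
      intro M
      rw [pow_succ', ContinuousLinearMap.mul_apply, ih, hAstep, Matrix.mul_assoc, ← pow_succ]
  -- summability of the exponential series for X
  have hsummX : Summable (fun n : ℕ => (Nat.factorial n : ℂ)⁻¹ • X ^ n) := by
    letI : NormedRing (Matrix (ZMod p × ZMod q) (ZMod p × ZMod q) ℂ) :=
      Matrix.frobeniusNormedRing
    letI : NormedAlgebra ℂ (Matrix (ZMod p × ZMod q) (ZMod p × ZMod q) ℂ) :=
      Matrix.frobeniusNormedAlgebra
    exact NormedSpace.expSeries_summable' (𝕂 := ℂ) X
  -- compute exp A applied to the standard basis matrix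
  have hexp : @NormedSpace.exp _ _ _ (@NonUnitalSeminormedRing.toIsTopologicalRing _
          (ContinuousLinearMap.toSeminormedRing (𝕜 := ℂ)
            (E := Matrix (ZMod p × ZMod q) (ZMod p × ZMod q) ℂ)).toNonUnitalSeminormedRing)
          A (Matrix.single (i, j) (i', j') (1 : ℂ))
      = PhiL p q i i' j j' (NormedSpace.exp X) := by
    rw [← PhiL_one p q i i' j j']
    refine (exp_clm_apply (E := Matrix (ZMod p × ZMod q) (ZMod p × ZMod q) ℂ) A
      (PhiL p q i i' j j' 1)).trans ?_
    rw [NormedSpace.exp_eq_tsum ℂ]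
    have h2 : ∀ n : ℕ, ((Nat.factorial n : ℂ)⁻¹ • A ^ n) (PhiL p q i i' j j' 1)
        = (LinearMap.toContinuousLinearMap (PhiL p q i i' j j')) ((Nat.factorial n : ℂ)⁻¹ • X ^ n) := by
      intro n
      rw [ContinuousLinearMap.smul_apply, key n 1, one_mul]
      simp
    refine (tsum_congr fun n => h2 n).trans ?_
    rw [← ContinuousLinearMap.map_tsum _ hsummX]
    simp
  rw [hexp, PhiL_apply]
  refine Fintype.sum_equiv (Equiv.neg (ZMod p × ZMod q)) _ _ fun u => ?_
  obtain ⟨u1, u2⟩ := u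
  simp [wB, Equiv.neg_apply]
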